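/- Let U, V be Hilbert spaces, b : U × V → ℝ a bounded bilinear form inducing an isomorphism B ∈ Lis(U,V'), U^δ ⊂ U and F^δ ⊂ V' finite-dimensional subspaces, and V̄̄^δ ⊆ V a closed subspace with inf-sup constant γ̄̄^δ := inf over pairs (u,f) ∈ U^δ × F^δ with Bu ≠ f of sup_{0≠v∈V̄̄^δ} (b(u,v)−f(v))/(‖u−B⁻¹f‖_U ‖v‖_V) > 0. Define R^δ(u;f) ∈ V̄̄^δ by ⟨R^δ(u;f), v⟩_V = b(u,v) − f(v) for v ∈ V̄̄^δ. Then for all (u,f) ∈ U^δ × F^δ: γ̄̄^δ ‖u − B⁻¹f‖_U ≤ ‖R^δ(u;f)‖_V ≤ ‖B‖_{L(U,V')} ‖u − B⁻¹f‖_U. -/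

import Mathlib

open scoped RealInnerProductSpace

/-- Two-sided bounds for the projected lifted residual: for `(u,f)` in the discrete
trial and data spaces, `γ‖u − B⁻¹f‖ ≤ ‖R^δ(u;f)‖ ≤ ‖B‖·‖u − B⁻¹f‖`. -/
theorem stmt2
    {U V : Type*}
    [NormedAddCommGroup U] [InnerProductSpace ℝ U] [CompleteSpace U]
    [NormedAddCommGroup V] [InnerProductSpace ℝ V] [CompleteSpace V]
    (B : U ≃L[ℝ] StrongDual ℝ V)
    (Uδ : Submodule ℝ U) [FiniteDimensional ℝ Uδ]
    (Fδ : Submodule ℝ (StrongDual ℝ V)) [FiniteDimensional ℝ Fδ]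
    (W : Submodule ℝ V) (hW : IsClosed (W : Set V))
    (γ : ℝ) (hγ : 0 < γ)
    (hinf : ∀ u ∈ Uδ, ∀ f ∈ Fδ, B u ≠ f →
      γ ≤ sSup {r : ℝ | ∃ v ∈ W, v ≠ 0 ∧
        r = (B u v - f v) / (‖u - B.symm f‖ * ‖v‖)})
    (R : U → StrongDual ℝ V → V)
    (hR_mem : ∀ u f, R u f ∈ W)
    (hR : ∀ u f, ∀ v ∈ W, ⟪R u f, v⟫ = B u v - f v) :
    ∀ u ∈ Uδ, ∀ f ∈ Fδ,
      γ * ‖u - B.symm f‖ ≤ ‖R u f‖ ∧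
        ‖R u f‖ ≤ ‖(B : U →L[ℝ] StrongDual ℝ V)‖ * ‖u - B.symm f‖ := by
  intro u hu f hf
  set e := u - B.symm f with he
  have hBe : ∀ v, (B e) v = B u v - f v := by
    intro v
    simp [he, map_sub, B.apply_symm_apply, ContinuousLinearMap.sub_apply]
  have hRv : ∀ v ∈ W, ⟪R u f, v⟫ = (B e) v := fun v hv => by
    rw [hR u f v hv, hBe]
  have hRR : ‖R u f‖ * ‖R u f‖ = (B e) (R u f) := by
    rw [← hRv _ (hR_mem u f), real_inner_self_eq_norm_mul_norm]
  constructor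
  · by_cases hBf : B u = f
    · have he0 : e = 0 := by
        rw [he, sub_eq_zero, ← hBf, B.symm_apply_apply]
      rw [he0, norm_zero, mul_zero]
      exact norm_nonneg _
    · have hene : e ≠ 0 := by
        intro h
        apply hBf
        have : u = B.symm f := by rwa [he, sub_eq_zero] at h
        rw [this, B.apply_symm_apply]
      have hen : (0:ℝ) < ‖e‖ := norm_pos_iff.mpr hene
      have hbound : sSup {r : ℝ | ∃ v ∈ W, v ≠ 0 ∧
          r = (B u v - f v) / (‖u - B.symm f‖ * ‖v‖)} ≤ ‖R u f‖ / ‖e‖ := by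
        apply Real.sSup_le
        · rintro r ⟨v, hv, hv0, rfl⟩
          rw [← hBe, ← hRv v hv, ← he]
          have hcs : ⟪R u f, v⟫ ≤ ‖R u f‖ * ‖v‖ := real_inner_le_norm _ _
          have hvn : (0:ℝ) < ‖v‖ := norm_pos_iff.mpr hv0
          rw [div_le_div_iff₀ (by positivity) hen]
          nlinarith
        · positivity
      have h1 : γ ≤ ‖R u f‖ / ‖e‖ := le_trans (hinf u hu f hf hBf) hbound
      calc γ * ‖e‖ ≤ ‖R u f‖ / ‖e‖ * ‖e‖ := by nlinarith
        _ = ‖R u f‖ := by field_simp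
  · have h1 : (B e) (R u f) ≤ ‖B e‖ * ‖R u f‖ :=
      le_trans (le_abs_self _) ((B e).le_opNorm (R u f))
    have h2 : ‖B e‖ ≤ ‖(B : U →L[ℝ] StrongDual ℝ V)‖ * ‖e‖ :=
      (B : U →L[ℝ] StrongDual ℝ V).le_opNorm e
    rcases eq_or_lt_of_le (norm_nonneg (R u f)) with h | h
    · rw [← h]; positivity
    · have h3 : ‖R u f‖ * ‖R u f‖ ≤ ‖B e‖ * ‖R u f‖ := hRR ▸ h1
      have h4 : ‖R u f‖ ≤ ‖B e‖ := le_of_mul_le_mul_right h3 h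
      exact le_trans h4 h2
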